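/- For every n ≥ 1, every row of the inverse of the matrix A_{4n} has the sum of absolute values of its entries at most 3. -/

import Mathlib

open scoped BigOperators

/-- Symbols: x₁,x₂,x₃,x₄ are 0,1,2,3 and αⱼ = j+3 (so all symbols are distinct naturals). -/
def α (j : ℕ) : ℕ := j + 3

/-- The points y₁, y₂, y₃, … of the paper's construction. -/
def y : ℕ → Fin 4 → ℕ := fun k =>
  if k = 1 then ![0, 1, 2, 3]
  else if k = 2 then ![0, 1, α 1, α 2]
  else match k % 4 with
    | 1 => ![0, α (k - 1), α k, α (k + 1)]
    | 2 => ![α (k - 3), 1, α (k - 1), α k]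
    | 3 => ![α k, α (k + 1), 2, α (k - 1)]
    | _ => ![α (k - 1), α k, α (k - 3), 3]

/-- u = (u₁,u₂,u₃,u₄) solves equation (1) for f on S. -/
def Solves (S : Set (Fin 4 → ℕ)) (f : (Fin 4 → ℕ) → ℂ) (u : Fin 4 → ℕ → ℂ) : Prop :=
  ∀ p ∈ S, f p = ∑ i, u i (p i)

/-- S is good: every complex function on S decomposes into coordinate functions. -/
def IsGood (S : Set (Fin 4 → ℕ)) : Prop := ∀ f, ∃ u, Solves S f u

/-- i-th projection of S. -/
def proj (S : Set (Fin 4 → ℕ)) (i : Fin 4) : Set ℕ := (fun p => p i) '' S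

/-- B is a boundary set of S: for every f and every prescription U on B,
equation (1) admits a solution agreeing with U on B, unique on the projections of S. -/
def IsBoundary (S : Set (Fin 4 → ℕ)) (B : Set ℕ) : Prop :=
  B ⊆ ⋃ i, proj S i ∧
  ∀ f : (Fin 4 → ℕ) → ℂ, ∀ U : ℕ → ℂ,
    (∃ u, Solves S f u ∧ ∀ i, ∀ a ∈ B ∩ proj S i, u i a = U a) ∧
    ∀ u v, Solves S f u → (∀ i, ∀ a ∈ B ∩ proj S i, u i a = U a) →
      Solves S f v → (∀ i, ∀ a ∈ B ∩ proj S i, v i a = U a) →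
      ∀ i, ∀ a ∈ proj S i, u i a = v i a

/-- S is full: a maximal good subset of the product of its projections. -/
def IsFull (S : Set (Fin 4 → ℕ)) : Prop :=
  IsGood S ∧ ∀ T : Set (Fin 4 → ℕ), S ⊆ T → (∀ p ∈ T, ∀ i, p i ∈ proj S i) →
    IsGood T → T = S

/-- Sₙ = {y₁,…,y_N}. -/
def Sn (N : ℕ) : Set (Fin 4 → ℕ) := y '' Set.Icc 1 N

/-- The infinite set S = {y₁, y₂, …}. -/
def Sinf : Set (Fin 4 → ℕ) := y '' Set.Ici 1

/-- The extra point z = zₙ = (α_{4n−1}, x₂, α_{4n−3}, x₄). -/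
def z (n : ℕ) : Fin 4 → ℕ := ![α (4 * n - 1), 1, α (4 * n - 3), 3]

/-- Two points of S are related iff some finite full subset of S contains both. -/
def Related (S : Set (Fin 4 → ℕ)) (p q : Fin 4 → ℕ) : Prop :=
  ∃ K, K ⊆ S ∧ K.Finite ∧ IsFull K ∧ p ∈ K ∧ q ∈ K

/-- The 4n×4n incidence matrix A_{4n}: rows y₂,…,y_{4n},zₙ; columns α₁,…,α_{4n}. -/
def A (n : ℕ) : Matrix (Fin (4 * n)) (Fin (4 * n)) ℚ :=
  Matrix.of fun i j =>
    if ∃ k, (if (i : ℕ) = 4 * n - 1 then z n else y ((i : ℕ) + 2)) k = (j : ℕ) + 4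
    then 1 else 0


-- ===================== auxiliary development =====================

section Aux

lemma y_eq_1' (k : ℕ) (h1 : k ≠ 1) (h : k % 4 = 1) : y k = ![0, α (k - 1), α k, α (k + 1)] := by
  unfold y
  rw [if_neg h1, if_neg (by omega), h]
  rfl

lemma y_eq_2' (k : ℕ) (h2 : k ≠ 2) (h : k % 4 = 2) : y k = ![α (k - 3), 1, α (k - 1), α k] := by
  unfold y
  rw [if_neg (by omega), if_neg h2, h]
  rfl

lemma y_eq_3' (k : ℕ) (h : k % 4 = 3) : y k = ![α k, α (k + 1), 2, α (k - 1)] := by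
  unfold y
  rw [if_neg (by omega), if_neg (by omega), h]
  rfl

lemma y_eq_0' (k : ℕ) (h : k % 4 = 0) : y k = ![α (k - 1), α k, α (k - 3), 3] := by
  unfold y
  rw [if_neg (by omega), if_neg (by omega), h]
  rfl

lemma exists4 (a b c d v : ℕ) :
    (∃ k : Fin 4, ![a, b, c, d] k = v) ↔ (a = v ∨ b = v ∨ c = v ∨ d = v) := by
  constructor
  · rintro ⟨k, hk⟩; fin_cases k <;> simp_all
  · rintro (h | h | h | h)
    exacts [⟨0, h⟩, ⟨1, h⟩, ⟨2, h⟩, ⟨3, h⟩]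

def eQ (c j : ℕ) : ℚ := if j = c then 1 else 0
def Pm (m j : ℕ) : ℚ :=
  if j = 0 then (2 ^ (m + 1))⁻¹
  else if j ≤ 2 * m then 2 ^ ((j - 1) / 2) / 2 ^ (m + 1)
  else if j ≤ 2 * m + 2 then 2⁻¹
  else 0
def Ps (m r j : ℕ) : ℚ :=
  if j = 0 then (-1) ^ m
  else if j ≤ 2 * m then (-1) ^ (m + (j - 1) / 2 + 1)
  else if j = 2 * m + 1 then (if r = 0 then -1 else 1)
  else if j = 2 * m + 2 then (if r = 0 then 1 else -1)
  else 1
def P (m r j : ℕ) : ℚ := Ps m r j * Pm m j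

lemma I1 (j : ℕ) : P 0 0 j + P 0 1 j = eQ 0 j := by
  unfold P Ps Pm eQ
  rcases Nat.lt_or_ge j 3 with h | h
  · interval_cases j <;> norm_num
  · have h0 : ¬ (j = 0) := by omega
    have h1 : ¬ (j ≤ 0) := by omega
    have h2 : ¬ (j ≤ 2) := by omega
    simp [h0, h1, h2, show ¬ (j = 1) from by omega, show ¬ (j = 2) from by omega]

lemma I4 (m j : ℕ) : P m 1 j - P m 0 j = eQ (2*m+1) j - eQ (2*m+2) j := by
  have h : ∀ c : Prop, True := fun _ => trivial
  unfold P Ps Pm eQ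
  rcases eq_or_ne j 0 with rfl | hj0
  · simp
  rcases le_or_gt j (2*m) with hj1 | hj1
  · simp only [if_neg hj0, if_pos hj1]
    have : ¬ (j = 2*m+1) := by omega
    have : ¬ (j = 2*m+2) := by omega
    simp_all
  have : j = 2*m+1 ∨ j = 2*m+2 ∨ 2*m+2 < j := by omega
  rcases this with rfl | rfl | hbig
  · have h1 : ¬ (2*m+1 = 0) := by omega
    have h2 : ¬ (2*m+1 ≤ 2*m) := by omega
    have h3 : ¬ (2*m+1 = 2*m+2) := by omega
    simp [h1, h2, h3]; norm_num
  · have h1 : ¬ (2*m+2 = 0) := by omega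
    have h2 : ¬ (2*m+2 ≤ 2*m) := by omega
    have h3 : ¬ (2*m+2 = 2*m+1) := by omega
    simp [h1, h2, h3]; norm_num
  · have h1 : ¬ (j ≤ 2*m) := by omega
    have h2 : ¬ (j = 2*m+1) := by omega
    have h3 : ¬ (j = 2*m+2) := by omega
    have h4 : ¬ (j ≤ 2*m+2) := by omega
    simp [hj0, h1, h2, h3, h4]

lemma I2 (m j : ℕ) : P m 1 j + P (m+1) 0 j + P (m+1) 1 j = eQ (2*m+1) j := by
  unfold P Ps Pm eQ
  rcases eq_or_ne j 0 with rfl | hj0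
  · have : ¬ ((0:ℕ) = 2*m+1) := by omega
    simp only [↓reduceIte, this, if_neg, ite_false]
    rw [pow_succ (-1:ℚ) m, pow_succ (2:ℚ) (m+1)]
    field_simp
    ring
  rcases le_or_gt j (2*m) with hj1 | hj1
  · have hj2 : j ≤ 2*(m+1) := by omega
    have hne : ¬ (j = 2*m+1) := by omega
    simp only [if_neg hj0, if_pos hj1, if_pos hj2, if_neg hne, ite_false]
    rw [show m + 1 + (j-1)/2 + 1 = (m + (j-1)/2 + 1) + 1 by ring,
        pow_succ (-1:ℚ) (m + (j-1)/2 + 1), show m+1+1 = (m+1)+1 by ring,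
        pow_succ (2:ℚ) (m+1)]
    field_simp
    ring
  have : j = 2*m+1 ∨ j = 2*m+2 ∨ j = 2*m+3 ∨ j = 2*m+4 ∨ 2*m+4 < j := by omega
  rcases this with rfl | rfl | rfl | rfl | hbig
  · have h1 : ¬ (2*m+1 = 0) := by omega
    have h2 : ¬ (2*m+1 ≤ 2*m) := by omega
    have h3 : 2*m+1 ≤ 2*(m+1) := by omega
    have ht : (2*m+1-1)/2 = m := by omega
    simp only [if_neg h1, if_neg h2, if_pos rfl, if_pos h3, ht, ite_true, ite_false]
    rw [show m+1+m+1 = 2*(m+1) by ring, show m+1+1 = m+2 by ring]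
    rw [pow_mul (-1:ℚ), show (2:ℚ)^(m+2) = 2^m * 4 by rw [pow_add]; norm_num]
    field_simp
    norm_num
  · have h1 : ¬ (2*m+2 = 0) := by omega
    have h2 : ¬ (2*m+2 ≤ 2*m) := by omega
    have h2' : 2*m+2 ≤ 2*m+2 := le_refl _
    have h3 : 2*m+2 ≤ 2*(m+1) := by omega
    have h4 : ¬ (2*m+2 = 2*m+1) := by omega
    have ht : (2*m+2-1)/2 = m := by omega
    simp only [if_neg h1, if_neg h2, if_pos h2', if_pos h3, if_neg h4, ht, ite_true, ite_false]
    rw [show m+1+m+1 = 2*(m+1) by ring, show m+1+1 = m+2 by ring]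
    rw [pow_mul (-1:ℚ), show (2:ℚ)^(m+2) = 2^m * 4 by rw [pow_add]; norm_num]
    field_simp
    norm_num
  · have h1 : ¬ (2*m+3 = 0) := by omega
    have h2 : ¬ (2*m+3 ≤ 2*m) := by omega
    have h2' : ¬ (2*m+3 ≤ 2*m+2) := by omega
    have h3 : ¬ (2*m+3 ≤ 2*(m+1)) := by omega
    have h4 : 2*m+3 = 2*(m+1)+1 := by omega
    have h5 : 2*m+3 ≤ 2*(m+1)+2 := by omega
    have h6 : ¬ (2*m+3 = 2*m+1) := by omega
    simp only [if_neg h1, if_neg h2, if_neg h2', if_neg h3, if_pos h4, if_pos h5, if_neg h6,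
      ite_true, ite_false]
    norm_num
  · have h1 : ¬ (2*m+4 = 0) := by omega
    have h2 : ¬ (2*m+4 ≤ 2*m) := by omega
    have h2' : ¬ (2*m+4 ≤ 2*m+2) := by omega
    have h3 : ¬ (2*m+4 ≤ 2*(m+1)) := by omega
    have h4 : ¬ (2*m+4 = 2*(m+1)+1) := by omega
    have h4' : 2*m+4 = 2*(m+1)+2 := by omega
    have h5 : 2*m+4 ≤ 2*(m+1)+2 := by omega
    have h6 : ¬ (2*m+4 = 2*m+1) := by omega
    simp only [if_neg h1, if_neg h2, if_neg h2', if_neg h3, if_neg h4, if_pos h4', if_pos h5,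
      if_neg h6, ite_true, ite_false]
    norm_num
  · have h1 : ¬ (j = 0) := by omega
    have h2 : ¬ (j ≤ 2*m) := by omega
    have h2' : ¬ (j ≤ 2*m+2) := by omega
    have h3 : ¬ (j ≤ 2*(m+1)) := by omega
    have h5 : ¬ (j ≤ 2*(m+1)+2) := by omega
    have h6 : ¬ (j = 2*m+1) := by omega
    simp [h1, h2, h2', h3, h5, h6]

lemma I3 (m j : ℕ) : P m 0 j + P (m+1) 0 j + P (m+1) 1 j = eQ (2*m+2) j := by
  have := I2 m j
  have h4 := I4 m j
  have : P m 0 j = P m 1 j - (eQ (2*m+1) j - eQ (2*m+2) j) := by rw [← h4]; ring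
  rw [this]; rw [show P m 1 j - (eQ (2*m+1) j - eQ (2*m+2) j) + P (m+1) 0 j + P (m+1) 1 j
    = (P m 1 j + P (m+1) 0 j + P (m+1) 1 j) - (eQ (2*m+1) j - eQ (2*m+2) j) by ring, I2]
  ring

lemma Pm_nonneg (m j : ℕ) : 0 ≤ Pm m j := by
  unfold Pm; split_ifs <;> positivity

lemma abs_P (m r j : ℕ) : |P m r j| = Pm m j := by
  have h1 : |Ps m r j| = 1 := by
    unfold Ps; split_ifs <;> simp [abs_pow]
  rw [P, abs_mul, h1, one_mul, abs_of_nonneg (Pm_nonneg m j)]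

lemma eQ_nonneg (c j : ℕ) : 0 ≤ eQ c j := by unfold eQ; split_ifs <;> norm_num

lemma Pm_zero (j : ℕ) : Pm 0 j = (eQ 0 j + eQ 1 j + eQ 2 j) / 2 := by
  unfold Pm eQ
  rcases Nat.lt_or_ge j 3 with h | h
  · interval_cases j <;> norm_num
  · have h0 : ¬ (j = 0) := by omega
    simp [h0, show ¬ (j ≤ 0) from by omega, show ¬ (j ≤ 2) from by omega,
      show ¬ (j = 1) from by omega, show ¬ (j = 2) from by omega]

lemma Pm_succ (m j : ℕ) : Pm (m+1) j = Pm m j / 2 + (eQ (2*m+3) j + eQ (2*m+4) j) / 2 := by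
  unfold Pm eQ
  rcases eq_or_ne j 0 with rfl | hj0
  · simp only [↓reduceIte, if_neg (show ¬ ((0:ℕ) = 2*m+3) from by omega),
      if_neg (show ¬ ((0:ℕ) = 2*m+4) from by omega), pow_succ]
    field_simp
    ring
  rcases le_or_gt j (2*m) with hj1 | hj1
  · have h2 : j ≤ 2*(m+1) := by omega
    simp only [if_neg hj0, if_pos hj1, if_pos h2, if_neg (show ¬ (j = 2*m+3) from by omega),
      if_neg (show ¬ (j = 2*m+4) from by omega)]
    rw [show m+1+1 = (m+1)+1 by ring, pow_succ (2:ℚ) (m+1)]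
    field_simp
    ring
  have : j = 2*m+1 ∨ j = 2*m+2 ∨ j = 2*m+3 ∨ j = 2*m+4 ∨ 2*m+4 < j := by omega
  rcases this with rfl | rfl | rfl | rfl | hbig
  · have ht : (2*m+1-1)/2 = m := by omega
    simp only [if_neg hj0, if_neg (show ¬ (2*m+1 ≤ 2*m) from by omega),
      if_pos (show 2*m+1 ≤ 2*(m+1) from by omega),
      if_pos (show 2*m+1 ≤ 2*m+2 from by omega),
      if_neg (show ¬ (2*m+1 = 2*m+3) from by omega),
      if_neg (show ¬ (2*m+1 = 2*m+4) from by omega), ht]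
    rw [show m+1+1 = m+2 by ring, show (2:ℚ)^(m+2) = 2^m * 4 by rw [pow_add]; norm_num]
    field_simp
    ring
  · have ht : (2*m+2-1)/2 = m := by omega
    simp only [if_neg hj0, if_neg (show ¬ (2*m+2 ≤ 2*m) from by omega),
      if_pos (show 2*m+2 ≤ 2*(m+1) from by omega),
      if_pos (show 2*m+2 ≤ 2*m+2 from le_refl _),
      if_neg (show ¬ (2*m+2 = 2*m+3) from by omega),
      if_neg (show ¬ (2*m+2 = 2*m+4) from by omega), ht]
    rw [show m+1+1 = m+2 by ring, show (2:ℚ)^(m+2) = 2^m * 4 by rw [pow_add]; norm_num]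
    field_simp
    ring
  · simp only [if_neg hj0, if_neg (show ¬ (2*m+3 ≤ 2*m) from by omega),
      if_neg (show ¬ (2*m+3 ≤ 2*(m+1)) from by omega),
      if_neg (show ¬ (2*m+3 ≤ 2*m+2) from by omega),
      if_pos (show 2*m+3 ≤ 2*(m+1)+2 from by omega),
      if_pos (rfl : 2*m+3 = 2*m+3),
      if_neg (show ¬ (2*m+3 = 2*m+4) from by omega)]
    norm_num
  · simp only [if_neg hj0, if_neg (show ¬ (2*m+4 ≤ 2*m) from by omega),
      if_neg (show ¬ (2*m+4 ≤ 2*(m+1)) from by omega),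
      if_neg (show ¬ (2*m+4 ≤ 2*m+2) from by omega),
      if_pos (show 2*m+4 ≤ 2*(m+1)+2 from by omega),
      if_neg (show ¬ (2*m+4 = 2*m+3) from by omega),
      if_pos (rfl : 2*m+4 = 2*m+4)]
    norm_num
  · simp only [if_neg hj0, if_neg (show ¬ (j ≤ 2*m) from by omega),
      if_neg (show ¬ (j ≤ 2*(m+1)) from by omega),
      if_neg (show ¬ (j ≤ 2*m+2) from by omega),
      if_neg (show ¬ (j ≤ 2*(m+1)+2) from by omega),
      if_neg (show ¬ (j = 2*m+3) from by omega),
      if_neg (show ¬ (j = 2*m+4) from by omega)]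
    norm_num

lemma sum_eQ_le (N c : ℕ) : ∑ j : Fin N, eQ c (j : ℕ) ≤ 1 := by
  rcases Nat.lt_or_ge c N with h | h
  · have : ∀ j : Fin N, eQ c (j : ℕ) = if j = (⟨c, h⟩ : Fin N) then 1 else 0 := by
      intro j; unfold eQ; simp [Fin.ext_iff]
    rw [Finset.sum_congr rfl (fun j _ => this j), Finset.sum_ite_eq']
    simp
  · have : ∀ j : Fin N, eQ c (j : ℕ) = 0 := by
      intro j; have hj := j.isLt; unfold eQ; rw [if_neg (by omega)]
    rw [Finset.sum_congr rfl (fun j _ => this j)]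
    simp

lemma sum_Pm_le (N m : ℕ) : ∑ j : Fin N, Pm m (j : ℕ) ≤ 2 := by
  suffices h : ∑ j : Fin N, Pm m (j : ℕ) ≤ 2 - (2 ^ (m+1))⁻¹ by
    have : (0:ℚ) < (2 ^ (m+1) : ℚ) := by positivity
    nlinarith [inv_pos.mpr this]
  induction m with
  | zero =>
    have hs : ∑ j : Fin N, Pm 0 (j : ℕ)
        = ((∑ j : Fin N, eQ 0 (j:ℕ)) + (∑ j : Fin N, eQ 1 (j:ℕ)) + (∑ j : Fin N, eQ 2 (j:ℕ))) / 2 := by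
      have h1 : ∑ j : Fin N, Pm 0 (j:ℕ)
          = ∑ j : Fin N, (eQ 0 (j:ℕ) + eQ 1 (j:ℕ) + eQ 2 (j:ℕ)) / 2 :=
        Finset.sum_congr rfl fun j _ => Pm_zero _
      rw [h1, ← Finset.sum_div, Finset.sum_add_distrib, Finset.sum_add_distrib]
    have h0 := sum_eQ_le N 0
    have h1 := sum_eQ_le N 1
    have h2 := sum_eQ_le N 2
    rw [hs]
    norm_num
    linarith
  | succ m ih =>
    have hs : ∑ j : Fin N, Pm (m+1) (j : ℕ)
        = (∑ j : Fin N, Pm m (j:ℕ)) / 2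
          + ((∑ j : Fin N, eQ (2*m+3) (j:ℕ)) + (∑ j : Fin N, eQ (2*m+4) (j:ℕ))) / 2 := by
      have h1 : ∑ j : Fin N, Pm (m+1) (j:ℕ)
          = ∑ j : Fin N, (Pm m (j:ℕ) / 2 + (eQ (2*m+3) (j:ℕ) + eQ (2*m+4) (j:ℕ)) / 2) :=
        Finset.sum_congr rfl fun j _ => Pm_succ m _
      rw [h1, Finset.sum_add_distrib, ← Finset.sum_div, ← Finset.sum_div,
        Finset.sum_add_distrib]
    have h3 := sum_eQ_le N (2*m+3)
    have h4 := sum_eQ_le N (2*m+4)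
    have hp : ((2:ℚ) ^ (m+1+1))⁻¹ = (2 ^ (m+1))⁻¹ / 2 := by
      rw [pow_succ]; field_simp
    rw [hs, hp]
    linarith


/-- rows of the explicit inverse -/
def Brow (n : ℕ) (i : ℕ) : ℕ → ℚ :=
  if i = 4*n-1 then fun j => eQ (4*n-2) j - eQ (4*n-1) j
  else if i = 4*n-2 then fun j => -(P (2*n-2) 0 j) + eQ (4*n-1) j
  else fun j => P (i/2) (i%2) j

def Binv (n : ℕ) : Matrix (Fin (4*n)) (Fin (4*n)) ℚ :=
  Matrix.of fun i j => Brow n (i : ℕ) (j : ℕ)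

lemma A_apply (n : ℕ) (i j : Fin (4*n)) :
    A n i j = if (∃ k, (if (i:ℕ) = 4*n-1 then z n else y ((i:ℕ)+2)) k = (j:ℕ)+4) then 1 else 0 :=
  rfl

lemma sum2 {N : ℕ} (f g : Fin N → ℚ) (av bv : ℕ) (ha : av < N) (hb : bv < N)
    (hab : av ≠ bv)
    (hf : ∀ j : Fin N, f j = if ((j:ℕ) = av ∨ (j:ℕ) = bv) then 1 else 0) :
    ∑ j, f j * g j = g ⟨av, ha⟩ + g ⟨bv, hb⟩ := by
  have key : ∀ j : Fin N, f j * g j =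
      (if j = (⟨av, ha⟩ : Fin N) then g j else 0) + (if j = (⟨bv, hb⟩ : Fin N) then g j else 0) := by
    intro j
    rw [hf]
    simp only [Fin.ext_iff]
    by_cases h1 : (j:ℕ) = av <;> by_cases h2 : (j:ℕ) = bv <;> simp_all
  rw [Finset.sum_congr rfl (fun j _ => key j), Finset.sum_add_distrib,
    Finset.sum_ite_eq', Finset.sum_ite_eq']
  simp

lemma sum3 {N : ℕ} (f g : Fin N → ℚ) (av bv cv : ℕ) (ha : av < N) (hb : bv < N) (hc : cv < N)
    (hab : av ≠ bv) (hac : av ≠ cv) (hbc : bv ≠ cv)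
    (hf : ∀ j : Fin N, f j = if ((j:ℕ) = av ∨ (j:ℕ) = bv ∨ (j:ℕ) = cv) then 1 else 0) :
    ∑ j, f j * g j = g ⟨av, ha⟩ + g ⟨bv, hb⟩ + g ⟨cv, hc⟩ := by
  have key : ∀ j : Fin N, f j * g j =
      (if j = (⟨av, ha⟩ : Fin N) then g j else 0) + (if j = (⟨bv, hb⟩ : Fin N) then g j else 0)
        + (if j = (⟨cv, hc⟩ : Fin N) then g j else 0) := by
    intro j
    rw [hf]
    simp only [Fin.ext_iff]
    by_cases h1 : (j:ℕ) = av <;> by_cases h2 : (j:ℕ) = bv <;> by_cases h3 : (j:ℕ) = cv <;> simp_all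
  rw [Finset.sum_congr rfl (fun j _ => key j), Finset.sum_add_distrib, Finset.sum_add_distrib,
    Finset.sum_ite_eq', Finset.sum_ite_eq', Finset.sum_ite_eq']
  simp

lemma eQ_one {N : ℕ} (i j : Fin N) : eQ (i:ℕ) (j:ℕ) = (1 : Matrix (Fin N) (Fin N) ℚ) i j := by
  rcases eq_or_ne i j with rfl | h
  · simp [eQ, Matrix.one_apply]
  · rw [Matrix.one_apply_ne h]
    exact if_neg fun hh => h (Fin.ext hh.symm)

lemma Brow_eq_P (n i : ℕ) (h : i < 4*n-2) (j : ℕ) : Brow n i j = P (i/2) (i%2) j := by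
  unfold Brow; rw [if_neg (by omega), if_neg (by omega)]

lemma Brow_last' (n : ℕ) (h : 1 ≤ n) (j : ℕ) :
    Brow n (4*n-1) j = eQ (4*n-2) j - eQ (4*n-1) j := by
  unfold Brow; rw [if_pos rfl]

lemma Brow_pen' (n : ℕ) (h : 1 ≤ n) (j : ℕ) :
    Brow n (4*n-2) j = -(P (2*n-2) 0 j) + eQ (4*n-1) j := by
  unfold Brow; rw [if_neg (by omega), if_pos rfl]

lemma AB_eq_one (n : ℕ) (hn : 1 ≤ n) : A n * Binv n = 1 := by
  ext i j'
  rw [Matrix.mul_apply]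
  have hiN := i.isLt
  have hjN := j'.isLt
  have hcases : (i:ℕ) = 0 ∨ ((i:ℕ) % 2 = 1 ∧ (i:ℕ) < 4*n-1) ∨
      ((i:ℕ) % 2 = 0 ∧ 0 < (i:ℕ) ∧ (i:ℕ) < 4*n-1) ∨ (i:ℕ) = 4*n-1 := by omega
  rcases hcases with hi0 | ⟨hodd, hlt⟩ | ⟨heven, hpos, hlt⟩ | hlast
  · -- row i = 0
    have hy2 : y ((i:ℕ)+2) = ![0, 1, α 1, α 2] := by
      rw [hi0]; rfl
    have hf : ∀ j : Fin (4*n), A n i j = if ((j:ℕ) = 0 ∨ (j:ℕ) = 1) then 1 else 0 := by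
      intro j
      rw [A_apply]
      simp only [if_neg (show ¬ ((i:ℕ) = 4*n-1) from by omega), hy2, exists4]
      exact if_congr (by simp only [α]; omega) rfl rfl
    rw [sum2 (fun j => A n i j) (fun j => Binv n j j') 0 1 (by omega) (by omega)
      (by omega) hf]
    show Binv n ⟨0, by omega⟩ j' + Binv n ⟨1, by omega⟩ j' = _
    show Brow n 0 (j':ℕ) + Brow n 1 (j':ℕ) = _
    rw [Brow_eq_P n 0 (by omega), Brow_eq_P n 1 (by omega)]
    norm_num
    rw [I1, show (0:ℕ) = (i:ℕ) from hi0.symm, eQ_one]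
  · -- i odd, i < 4n-1
    have hf : ∀ j : Fin (4*n), A n i j =
        if ((j:ℕ) = (i:ℕ) ∨ (j:ℕ) = (i:ℕ)+1 ∨ (j:ℕ) = (i:ℕ)+2) then 1 else 0 := by
      intro j
      rw [A_apply]
      have hne : ¬ ((i:ℕ) = 4*n-1) := by omega
      rcases (show (i:ℕ) % 4 = 1 ∨ (i:ℕ) % 4 = 3 by omega) with h4 | h4
      · have hy : y ((i:ℕ)+2) = ![α ((i:ℕ)+2), α ((i:ℕ)+2+1), 2, α ((i:ℕ)+2-1)] :=
          y_eq_3' _ (by omega)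
        simp only [if_neg hne, hy, exists4]
        exact if_congr (by simp only [α]; omega) rfl rfl
      · have hy : y ((i:ℕ)+2) = ![0, α ((i:ℕ)+2-1), α ((i:ℕ)+2), α ((i:ℕ)+2+1)] :=
          y_eq_1' _ (by omega) (by omega)
        simp only [if_neg hne, hy, exists4]
        exact if_congr (by simp only [α]; omega) rfl rfl
    rw [sum3 (fun j => A n i j) (fun j => Binv n j j') (i:ℕ) ((i:ℕ)+1) ((i:ℕ)+2)
      (by omega) (by omega) (by omega) (by omega) (by omega) (by omega) hf]
    show Binv n ⟨(i:ℕ), by omega⟩ j' + Binv n ⟨(i:ℕ)+1, by omega⟩ j'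
        + Binv n ⟨(i:ℕ)+2, by omega⟩ j' = _
    show Brow n (i:ℕ) (j':ℕ) + Brow n ((i:ℕ)+1) (j':ℕ) + Brow n ((i:ℕ)+2) (j':ℕ) = _
    rcases (show (i:ℕ) = 4*n-3 ∨ (i:ℕ)+2 < 4*n-2 by omega) with hi3 | hlt2
    · -- boundary odd row
      rw [show (i:ℕ)+1 = 4*n-2 from by omega, show (i:ℕ)+2 = 4*n-1 from by omega,
        Brow_pen' n hn, Brow_last' n hn, Brow_eq_P n (i:ℕ) (by omega),
        show (i:ℕ)/2 = 2*n-2 from by omega, show (i:ℕ)%2 = 1 from hodd]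
      have h4 := I4 (2*n-2) (j':ℕ)
      rw [show 2*(2*n-2)+1 = 4*n-3 from by omega, show 2*(2*n-2)+2 = 4*n-2 from by omega] at h4
      rw [← eQ_one, hi3]
      linear_combination h4
    · -- generic odd row
      rw [Brow_eq_P n (i:ℕ) (by omega), Brow_eq_P n ((i:ℕ)+1) (by omega),
        Brow_eq_P n ((i:ℕ)+2) (by omega),
        show ((i:ℕ)+1)/2 = (i:ℕ)/2+1 from by omega, show ((i:ℕ)+1)%2 = 0 from by omega,
        show ((i:ℕ)+2)/2 = (i:ℕ)/2+1 from by omega, show ((i:ℕ)+2)%2 = 1 from by omega,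
        show (i:ℕ)%2 = 1 from hodd]
      have h2 := I2 ((i:ℕ)/2) (j':ℕ)
      rw [show 2*((i:ℕ)/2)+1 = (i:ℕ) from by omega] at h2
      rw [← eQ_one]
      linear_combination h2
  · -- i even, 0 < i < 4n-1
    have hf : ∀ j : Fin (4*n), A n i j =
        if ((j:ℕ) = (i:ℕ)-2 ∨ (j:ℕ) = (i:ℕ) ∨ (j:ℕ) = (i:ℕ)+1) then 1 else 0 := by
      intro j
      rw [A_apply]
      have hne : ¬ ((i:ℕ) = 4*n-1) := by omega
      rcases (show (i:ℕ) % 4 = 0 ∨ (i:ℕ) % 4 = 2 by omega) with h4 | h4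
      · have hy : y ((i:ℕ)+2) = ![α ((i:ℕ)+2-3), 1, α ((i:ℕ)+2-1), α ((i:ℕ)+2)] :=
          y_eq_2' _ (by omega) (by omega)
        simp only [if_neg hne, hy, exists4]
        exact if_congr (by simp only [α]; omega) rfl rfl
      · have hy : y ((i:ℕ)+2) = ![α ((i:ℕ)+2-1), α ((i:ℕ)+2), α ((i:ℕ)+2-3), 3] :=
          y_eq_0' _ (by omega)
        simp only [if_neg hne, hy, exists4]
        exact if_congr (by simp only [α]; omega) rfl rfl
    rw [sum3 (fun j => A n i j) (fun j => Binv n j j') ((i:ℕ)-2) (i:ℕ) ((i:ℕ)+1)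
      (by omega) (by omega) (by omega) (by omega) (by omega) (by omega) hf]
    show Binv n ⟨(i:ℕ)-2, by omega⟩ j' + Binv n ⟨(i:ℕ), by omega⟩ j'
        + Binv n ⟨(i:ℕ)+1, by omega⟩ j' = _
    show Brow n ((i:ℕ)-2) (j':ℕ) + Brow n (i:ℕ) (j':ℕ) + Brow n ((i:ℕ)+1) (j':ℕ) = _
    rcases (show (i:ℕ) = 4*n-2 ∨ (i:ℕ)+1 < 4*n-2 by omega) with hi2 | hlt2
    · -- boundary even row
      rw [show (i:ℕ)+1 = 4*n-1 from by omega, Brow_last' n hn,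
        show (i:ℕ) = 4*n-2 from hi2, Brow_pen' n hn, Brow_eq_P n (4*n-2-2) (by omega),
        show (4*n-2-2)/2 = 2*n-2 from by omega, show (4*n-2-2)%2 = 0 from by omega]
      rw [← eQ_one, hi2]
      ring
    · -- generic even row
      rw [Brow_eq_P n ((i:ℕ)-2) (by omega), Brow_eq_P n (i:ℕ) (by omega),
        Brow_eq_P n ((i:ℕ)+1) (by omega),
        show ((i:ℕ)-2)/2 = (i:ℕ)/2-1 from by omega, show ((i:ℕ)-2)%2 = 0 from by omega,
        show ((i:ℕ)+1)/2 = (i:ℕ)/2 from by omega, show ((i:ℕ)+1)%2 = 1 from by omega,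
        show (i:ℕ)%2 = 0 from heven]
      have h3 := I3 ((i:ℕ)/2-1) (j':ℕ)
      rw [show (i:ℕ)/2-1+1 = (i:ℕ)/2 from by omega,
        show 2*((i:ℕ)/2-1)+2 = (i:ℕ) from by omega] at h3
      rw [← eQ_one]
      linear_combination h3
  · -- last row : z
    have hf : ∀ j : Fin (4*n), A n i j =
        if ((j:ℕ) = 4*n-4 ∨ (j:ℕ) = 4*n-2) then 1 else 0 := by
      intro j
      rw [A_apply]
      simp only [if_pos hlast, z, exists4]
      exact if_congr (by simp only [α]; omega) rfl rfl
    rw [sum2 (fun j => A n i j) (fun j => Binv n j j') (4*n-4) (4*n-2)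
      (by omega) (by omega) (by omega) hf]
    show Binv n ⟨4*n-4, by omega⟩ j' + Binv n ⟨4*n-2, by omega⟩ j' = _
    show Brow n (4*n-4) (j':ℕ) + Brow n (4*n-2) (j':ℕ) = _
    rw [Brow_pen' n hn, Brow_eq_P n (4*n-4) (by omega),
      show (4*n-4)/2 = 2*n-2 from by omega, show (4*n-4)%2 = 0 from by omega]
    rw [← eQ_one, hlast]
    ring

end Aux

/-- every absolute row sum of the inverse of A_{4n} is at most 3. -/
theorem stmt_12 (n : ℕ) (hn : 1 ≤ n) :
    ∀ i : Fin (4 * n), ∑ j, |(A n)⁻¹ i j| ≤ 3 := by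
  intro i
  rw [Matrix.inv_eq_right_inv (AB_eq_one n hn)]
  have hiN := i.isLt
  have habs : ∀ j : Fin (4*n), |Binv n i j| = |Brow n (i:ℕ) (j:ℕ)| := fun j => rfl
  rw [Finset.sum_congr rfl (fun j _ => habs j)]
  rcases (show (i:ℕ) < 4*n-2 ∨ (i:ℕ) = 4*n-2 ∨ (i:ℕ) = 4*n-1 by omega) with hlt | hi2 | hi1
  · have hb : ∀ j : Fin (4*n), |Brow n (i:ℕ) (j:ℕ)| = Pm ((i:ℕ)/2) (j:ℕ) := by
      intro j
      rw [Brow_eq_P n (i:ℕ) hlt, abs_P]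
    rw [Finset.sum_congr rfl (fun j _ => hb j)]
    have := sum_Pm_le (4*n) ((i:ℕ)/2)
    linarith
  · have hb : ∀ j : Fin (4*n), |Brow n (i:ℕ) (j:ℕ)| ≤ Pm (2*n-2) (j:ℕ) + eQ (4*n-1) (j:ℕ) := by
      intro j
      rw [hi2, Brow_pen' n hn]
      calc |-(P (2*n-2) 0 (j:ℕ)) + eQ (4*n-1) (j:ℕ)|
          ≤ |-(P (2*n-2) 0 (j:ℕ))| + |eQ (4*n-1) (j:ℕ)| := abs_add_le _ _
        _ = Pm (2*n-2) (j:ℕ) + eQ (4*n-1) (j:ℕ) := by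
            rw [abs_neg, abs_P, abs_of_nonneg (eQ_nonneg _ _)]
    calc ∑ j : Fin (4*n), |Brow n (i:ℕ) (j:ℕ)|
        ≤ ∑ j : Fin (4*n), (Pm (2*n-2) (j:ℕ) + eQ (4*n-1) (j:ℕ)) :=
          Finset.sum_le_sum fun j _ => hb j
      _ = (∑ j : Fin (4*n), Pm (2*n-2) (j:ℕ)) + ∑ j : Fin (4*n), eQ (4*n-1) (j:ℕ) :=
          Finset.sum_add_distrib
      _ ≤ 3 := by
          have h1 := sum_Pm_le (4*n) (2*n-2)
          have h2 := sum_eQ_le (4*n) (4*n-1)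
          linarith
  · have hb : ∀ j : Fin (4*n), |Brow n (i:ℕ) (j:ℕ)| ≤ eQ (4*n-2) (j:ℕ) + eQ (4*n-1) (j:ℕ) := by
      intro j
      rw [hi1, Brow_last' n hn]
      calc |eQ (4*n-2) (j:ℕ) - eQ (4*n-1) (j:ℕ)|
          ≤ |eQ (4*n-2) (j:ℕ)| + |eQ (4*n-1) (j:ℕ)| := abs_sub _ _
        _ = eQ (4*n-2) (j:ℕ) + eQ (4*n-1) (j:ℕ) := by
            rw [abs_of_nonneg (eQ_nonneg _ _), abs_of_nonneg (eQ_nonneg _ _)]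
    calc ∑ j : Fin (4*n), |Brow n (i:ℕ) (j:ℕ)|
        ≤ ∑ j : Fin (4*n), (eQ (4*n-2) (j:ℕ) + eQ (4*n-1) (j:ℕ)) :=
          Finset.sum_le_sum fun j _ => hb j
      _ = (∑ j : Fin (4*n), eQ (4*n-2) (j:ℕ)) + ∑ j : Fin (4*n), eQ (4*n-1) (j:ℕ) :=
          Finset.sum_add_distrib
      _ ≤ 3 := by
          have h1 := sum_eQ_le (4*n) (4*n-2)
          have h2 := sum_eQ_le (4*n) (4*n-1)
          linarith
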